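/- For every positive integer n, the only possible rational root of the shifted Chebyshev polynomial T_n* = T_n(2X − 1) is 1/2. -/

import Mathlib

open Polynomial Polynomial.Chebyshev

lemma T_eval_rec (t : ℚ) (n : ℕ) :
    (T ℚ ((n : ℤ) + 2)).eval t = 2 * t * (T ℚ ((n : ℤ) + 1)).eval t - (T ℚ (n : ℤ)).eval t := by
  rw [T_add_two]; simp

noncomputable def S : ℕ → ℤ[X]
  | 0 => 2
  | 1 => X
  | (n + 2) => X * S (n + 1) - S n

lemma S_spec (x : ℚ) : ∀ n : ℕ, (Polynomial.aeval (2 * x) (S n)) = 2 * (T ℚ (n : ℤ)).eval x := by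
  have key : ∀ n : ℕ, (Polynomial.aeval (2 * x) (S n)) = 2 * (T ℚ (n : ℤ)).eval x ∧
      (Polynomial.aeval (2 * x) (S (n + 1))) = 2 * (T ℚ ((n : ℤ) + 1)).eval x := by
    intro n
    induction n with
    | zero => constructor <;> simp [_root_.S, T_zero, T_one, map_ofNat]
    | succ k ih =>
      obtain ⟨h1, h2⟩ := ih
      have e : (((k + 1 : ℕ) : ℤ)) = (k : ℤ) + 1 := by push_cast; ring
      refine ⟨by rw [e]; exact h2, ?_⟩
      have e2 : (((k + 1 : ℕ) : ℤ)) + 1 = (k : ℤ) + 2 := by push_cast; ring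
      rw [show S (k + 1 + 1) = X * S (k + 1) - S k from rfl, e2, T_eval_rec]
      simp only [map_sub, map_mul, Polynomial.aeval_X, h1, h2]
      ring
  exact fun n => (key n).1

lemma S_monic : ∀ n : ℕ, 0 < n → Monic (S n) ∧ (S n).degree = n := by
  have key : ∀ n : ℕ, (S n).degree ≤ n ∧ ((S (n + 1)).Monic ∧ (S (n + 1)).degree = (n + 1 : ℕ)) := by
    intro n
    induction n with
    | zero =>
      refine ⟨?_, monic_X, by simp [_root_.S]⟩
      simpa [_root_.S] using (Polynomial.degree_C_le (a := (2:ℤ))).trans (by norm_num)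
    | succ k ih =>
      obtain ⟨hd, hm, hdeg⟩ := ih
      have hXdeg : (X * S (k + 1)).degree = ((k + 2 : ℕ) : WithBot ℕ) := by
        rw [Polynomial.degree_mul, Polynomial.degree_X, hdeg]
        exact_mod_cast (by omega : 1 + (k + 1) = k + 2)
      have hlt : (-(S k)).degree < (X * S (k + 1)).degree := by
        rw [Polynomial.degree_neg, hXdeg]
        refine lt_of_le_of_lt hd ?_
        exact_mod_cast Nat.lt_succ_of_lt (Nat.lt_succ_self k)
      have hm2 : Monic (S (k + 2)) := by
        rw [show S (k + 2) = X * S (k + 1) - S k from rfl, sub_eq_add_neg]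
        exact (monic_X.mul hm).add_of_left hlt
      have hdeg2 : (S (k + 2)).degree = ((k + 2 : ℕ) : WithBot ℕ) := by
        rw [show S (k + 2) = X * S (k + 1) - S k from rfl, sub_eq_add_neg,
          Polynomial.degree_add_eq_left_of_degree_lt hlt, hXdeg]
      exact ⟨le_of_eq hdeg, hm2, hdeg2⟩
  rintro (_ | n) h
  · omega
  · exact (key n).2

lemma T_ge_one (t : ℚ) (ht : 1 ≤ t) (n : ℕ) : 1 ≤ (T ℚ (n : ℤ)).eval t := by
  have key : ∀ n : ℕ, 1 ≤ (T ℚ (n : ℤ)).eval t ∧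
      (T ℚ (n : ℤ)).eval t ≤ (T ℚ ((n : ℤ) + 1)).eval t := by
    intro n
    induction n with
    | zero => refine ⟨by simp [T_zero], ?_⟩; simp [T_zero, T_one]; exact ht
    | succ k ih =>
      obtain ⟨h1, h2⟩ := ih
      have h3 : 1 ≤ (T ℚ ((k : ℤ) + 1)).eval t := le_trans h1 h2
      have hrec := T_eval_rec t k
      have e : (((k + 1 : ℕ) : ℤ)) = (k : ℤ) + 1 := by push_cast; ring
      have e2 : (((k + 1 : ℕ) : ℤ)) + 1 = (k : ℤ) + 2 := by push_cast; ring
      constructor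
      · rw [e]; exact h3
      · rw [e2, e, hrec]; nlinarith
  exact (key n).1

lemma T_parity (t : ℚ) (n : ℕ) :
    (T ℚ (n : ℤ)).eval (-t) = (-1) ^ n * (T ℚ (n : ℤ)).eval t := by
  have key : ∀ n : ℕ, (T ℚ (n : ℤ)).eval (-t) = (-1) ^ n * (T ℚ (n : ℤ)).eval t ∧
      (T ℚ ((n : ℤ) + 1)).eval (-t) = (-1) ^ (n + 1) * (T ℚ ((n : ℤ) + 1)).eval t := by
    intro n
    induction n with
    | zero => constructor <;> simp [T_zero, T_one]
    | succ k ih =>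
      obtain ⟨h1, h2⟩ := ih
      have e : (((k + 1 : ℕ) : ℤ)) = (k : ℤ) + 1 := by push_cast; ring
      refine ⟨by rw [e]; exact h2, ?_⟩
      have e2 : (((k + 1 : ℕ) : ℤ)) + 1 = (k : ℤ) + 2 := by push_cast; ring
      rw [e2, T_eval_rec, T_eval_rec, h1, h2]
      ring

  exact (key n).1

noncomputable def b (k : ℕ) : ℚ := (T ℚ (k : ℤ)).eval (1/2)

lemma b_rec (k : ℕ) : b (k + 2) = b (k + 1) - b k := by
  unfold b
  have e : (((k + 2 : ℕ) : ℤ)) = (k : ℤ) + 2 := by push_cast; ring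
  have e1 : (((k + 1 : ℕ) : ℤ)) = (k : ℤ) + 1 := by push_cast; ring
  rw [e, e1, T_eval_rec]
  ring

lemma T_half_ne_zero (n : ℕ) : (T ℚ (n : ℤ)).eval (1/2) ≠ 0 := by
  have key : ∀ k : ℕ, (b k = 1 ∧ b (k+1) = 1/2) ∨ (b k = 1/2 ∧ b (k+1) = -(1/2)) ∨
      (b k = -(1/2) ∧ b (k+1) = -1) ∨ (b k = -1 ∧ b (k+1) = -(1/2)) ∨
      (b k = -(1/2) ∧ b (k+1) = 1/2) ∨ (b k = 1/2 ∧ b (k+1) = 1) := by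
    intro k
    induction k with
    | zero =>
      left
      constructor <;> simp [b, T_zero, T_one]
    | succ m ih =>
      have h3 : b (m + 2) = b (m + 1) - b m := b_rec m
      have e : m + 1 + 1 = m + 2 := rfl
      rw [e]
      rcases ih with ⟨u, v⟩ | ⟨u, v⟩ | ⟨u, v⟩ | ⟨u, v⟩ | ⟨u, v⟩ | ⟨u, v⟩ <;>
        rw [u, v] at h3 <;> norm_num [v, h3]
  have hb : b n ≠ 0 := by
    rcases key n with ⟨u, _⟩ | ⟨u, _⟩ | ⟨u, _⟩ | ⟨u, _⟩ | ⟨u, _⟩ | ⟨u, _⟩ <;> rw [u] <;> norm_num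
  exact hb

theorem shifted_chebyshev_rational_root (n : ℕ) (hn : 0 < n) (q : ℚ)
    (hq : ((T ℚ n).comp (2 * X - 1)).eval q = 0) : q = 1 / 2 := by
  set x : ℚ := 2 * q - 1 with hx
  have hTx : (T ℚ (n : ℤ)).eval x = 0 := by
    rw [Polynomial.eval_comp] at hq
    simpa [hx] using hq
  have hint : IsIntegral ℤ (2 * x) := by
    refine ⟨S n, (S_monic n hn).1, ?_⟩
    rw [← Polynomial.aeval_def, S_spec, hTx, mul_zero]
  obtain ⟨m, hm⟩ := IsIntegrallyClosed.isIntegral_iff.mp hint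
  have hmQ : (m : ℚ) = 2 * x := by exact_mod_cast hm
  have hxlt : x < 1 := by
    by_contra h
    push_neg at h
    have := T_ge_one x h n
    rw [hTx] at this; norm_num at this
  have hxgt : -1 < x := by
    by_contra h
    push_neg at h
    have h1 : 1 ≤ -x := by linarith
    have := T_ge_one (-x) h1 n
    rw [T_parity, hTx, mul_zero] at this
    norm_num at this
  have hm1 : (m : ℚ) < 2 := by rw [hmQ]; linarith
  have hm2 : (-2 : ℚ) < m := by rw [hmQ]; linarith
  have hmlt : m < 2 := by exact_mod_cast hm1
  have hmgt : -2 < m := by exact_mod_cast hm2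
  interval_cases m
  · -- m = -1, x = -1/2
    exfalso
    have hx2 : x = -(1/2) := by
      have h : ((-1 : ℤ) : ℚ) = 2 * x := hmQ
      push_cast at h; linarith
    have hp := T_parity (1/2) n
    rw [← hx2, hTx] at hp
    rcases mul_eq_zero.mp hp.symm with h | h
    · exact pow_ne_zero n (by norm_num : (-1 : ℚ) ≠ 0) h
    · exact T_half_ne_zero n h
  · -- m = 0
    have h : x = 0 := by
      have h0 : ((0 : ℤ) : ℚ) = 2 * x := hmQ
      push_cast at h0; linarith
    rw [hx] at h; linarith
  · -- m = 1, x = 1/2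
    exfalso
    exact T_half_ne_zero n (by
      have h : ((1 : ℤ) : ℚ) = 2 * x := hmQ
      push_cast at h
      have hx2 : x = 1/2 := by linarith
      rw [← hx2]; exact hTx)
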